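/- For a convex function F = g + r with g differentiable, ∇g L-Lipschitz, r convex, step size α = 1/L, and minimizer z* of F, the proximal gradient iterates z^{(k)} satisfy F(z^{(K)}) − F(z*) ≤ L·‖z^{(0)} − z*‖₂²/(2K), i.e., an O(1/K) rate. -/

import Mathlib

open Set Filter Topology InnerProductSpace
open scoped RealInnerProductSpace

section ProxGradAux
variable {m : ℕ}

lemma lineDeriv_aux {g : EuclideanSpace ℝ (Fin m) → ℝ}
    {gradg : EuclideanSpace ℝ (Fin m) → EuclideanSpace ℝ (Fin m)}
    (hgrad : ∀ z, HasGradientAt g (gradg z) z)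
    (a d : EuclideanSpace ℝ (Fin m)) (t : ℝ) :
    HasDerivAt (fun s : ℝ => g (a + s • d)) ⟪gradg (a + t • d), d⟫ t := by
  have hline : HasDerivAt (fun s : ℝ => a + s • d) d t := by
    simpa using ((hasDerivAt_id t).smul_const d).const_add a
  have := ((hgrad (a + t • d)).hasFDerivAt).comp_hasDerivAt t hline
  simpa [InnerProductSpace.toDual_apply_apply, Function.comp_def] using this

lemma grad_convex_ineq {g : EuclideanSpace ℝ (Fin m) → ℝ}
    (hg : ConvexOn ℝ Set.univ g)
    {gradg : EuclideanSpace ℝ (Fin m) → EuclideanSpace ℝ (Fin m)}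
    (hgrad : ∀ z, HasGradientAt g (gradg z) z)
    (a b : EuclideanSpace ℝ (Fin m)) :
    g a + ⟪gradg a, b - a⟫ ≤ g b := by
  have hd : HasDerivAt (fun s : ℝ => g (a + s • (b - a))) ⟪gradg a, b - a⟫ 0 := by
    simpa using lineDeriv_aux hgrad a (b - a) 0
  have hslope : Tendsto (slope (fun s : ℝ => g (a + s • (b - a))) 0) (𝓝[>] 0)
      (𝓝 ⟪gradg a, b - a⟫) :=
    (hasDerivAt_iff_tendsto_slope.mp hd).mono_left
      (nhdsWithin_mono _ (fun x hx => ne_of_gt hx))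
  have hev : ∀ᶠ t in 𝓝[>] (0:ℝ),
      slope (fun s : ℝ => g (a + s • (b - a))) 0 t ≤ g b - g a := by
    filter_upwards [Ioc_mem_nhdsGT_of_mem (by norm_num : (0:ℝ) ∈ Ico 0 1)] with t ht
    have hline : a + t • (b - a) = (1 - t) • a + t • b := by module
    have hconv : g (a + t • (b - a)) ≤ (1 - t) * g a + t * g b := by
      rw [hline]
      exact hg.2 (mem_univ a) (mem_univ b) (by linarith [ht.2]) ht.1.le (by ring)
    rw [slope_def_field]
    rw [div_le_iff₀ (by simpa using ht.1)]
    simp only [smul_eq_mul, zero_smul, add_zero, sub_zero]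
    nlinarith [hconv]
  have := le_of_tendsto hslope hev
  linarith

lemma descent_lemma {g : EuclideanSpace ℝ (Fin m) → ℝ}
    {gradg : EuclideanSpace ℝ (Fin m) → EuclideanSpace ℝ (Fin m)}
    (hgrad : ∀ z, HasGradientAt g (gradg z) z)
    {L : ℝ}
    (hLip : ∀ z₁ z₂, ‖gradg z₁ - gradg z₂‖ ≤ L * ‖z₁ - z₂‖)
    (a b : EuclideanSpace ℝ (Fin m)) :
    g b ≤ g a + ⟪gradg a, b - a⟫ + L / 2 * ‖b - a‖ ^ 2 := by
  set d := b - a with hd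
  set ψ : ℝ → ℝ := fun t => g (a + t • d) - t * ⟪gradg a, d⟫ - L / 2 * ‖d‖ ^ 2 * t ^ 2 with hψ
  have hψd : ∀ t : ℝ, HasDerivAt ψ
      (⟪gradg (a + t • d), d⟫ - ⟪gradg a, d⟫ - L / 2 * ‖d‖ ^ 2 * (2 * t)) t := by
    intro t
    have h1 := lineDeriv_aux hgrad a d t
    have h2 : HasDerivAt (fun t : ℝ => t * ⟪gradg a, d⟫) ⟪gradg a, d⟫ t := by
      simpa using (hasDerivAt_id t).mul_const (⟪gradg a, d⟫)
    have h3 : HasDerivAt (fun t : ℝ => L / 2 * ‖d‖ ^ 2 * t ^ 2)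
        (L / 2 * ‖d‖ ^ 2 * (2 * t)) t := by
      simpa [mul_comm] using (hasDerivAt_pow 2 t).const_mul (L / 2 * ‖d‖ ^ 2)
    exact (h1.sub h2).sub h3
  have hanti : AntitoneOn ψ (Icc 0 1) := by
    apply antitoneOn_of_deriv_nonpos (convex_Icc 0 1)
    · exact fun t _ => ((hψd t).differentiableAt).continuousAt.continuousWithinAt
    · intro t ht
      exact ((hψd t).differentiableAt).differentiableWithinAt
    · intro t ht
      rw [interior_Icc] at ht
      rw [(hψd t).deriv]
      have h4 : ⟪gradg (a + t • d) - gradg a, d⟫ ≤ L * t * ‖d‖ ^ 2 := by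
        calc ⟪gradg (a + t • d) - gradg a, d⟫ ≤ ‖gradg (a + t • d) - gradg a‖ * ‖d‖ :=
              real_inner_le_norm _ _
        _ ≤ (L * ‖(a + t • d) - a‖) * ‖d‖ := by
              apply mul_le_mul_of_nonneg_right (hLip _ _) (norm_nonneg _)
        _ = L * t * ‖d‖ ^ 2 := by
              rw [add_sub_cancel_left, norm_smul, Real.norm_eq_abs, abs_of_pos ht.1]; ring
      rw [inner_sub_left] at h4
      nlinarith [h4]
  have hle := hanti (left_mem_Icc.2 zero_le_one) (right_mem_Icc.2 zero_le_one) zero_le_one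
  have hψ0 : ψ 0 = g a := by simp [hψ]
  have hψ1 : ψ 1 = g b - ⟪gradg a, d⟫ - L / 2 * ‖d‖ ^ 2 := by
    simp [hψ, hd]
  rw [hψ0, hψ1] at hle
  linarith

lemma prox_opt_aux {r : EuclideanSpace ℝ (Fin m) → ℝ}
    (hr : ConvexOn ℝ Set.univ r) {L : ℝ}
    (xp y : EuclideanSpace ℝ (Fin m))
    (hle : ∀ w, L / 2 * ‖xp - y‖ ^ 2 + r xp ≤ L / 2 * ‖w - y‖ ^ 2 + r w)
    (w : EuclideanSpace ℝ (Fin m)) :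
    r xp ≤ r w + L * ⟪xp - y, w - xp⟫ := by
  have key : ∀ t : ℝ, t ∈ Ioc (0:ℝ) 1 →
      r xp ≤ r w + L * ⟪xp - y, w - xp⟫ + L / 2 * t * ‖w - xp‖ ^ 2 := by
    intro t ht
    have h1 := hle (xp + t • (w - xp))
    have hnorm : ‖xp + t • (w - xp) - y‖ ^ 2
        = ‖xp - y‖ ^ 2 + 2 * (t * ⟪xp - y, w - xp⟫) + t ^ 2 * ‖w - xp‖ ^ 2 := by
      have h : xp + t • (w - xp) - y = (xp - y) + t • (w - xp) := by module
      rw [h, norm_add_sq_real, real_inner_smul_right, norm_smul, Real.norm_eq_abs,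
        mul_pow, sq_abs]
    have hconv : r (xp + t • (w - xp)) ≤ (1 - t) * r xp + t * r w := by
      have h : xp + t • (w - xp) = (1 - t) • xp + t • w := by module
      rw [h]
      exact hr.2 (mem_univ xp) (mem_univ w) (by linarith [ht.2]) ht.1.le (by ring)
    rw [hnorm] at h1
    have h2 : t * r xp ≤ t * (r w + L * ⟪xp - y, w - xp⟫ + L / 2 * t * ‖w - xp‖ ^ 2) := by
      nlinarith [h1, hconv]
    exact le_of_mul_le_mul_left h2 ht.1
  have htend : Tendsto (fun t : ℝ => r w + L * ⟪xp - y, w - xp⟫ + L / 2 * t * ‖w - xp‖ ^ 2)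
      (𝓝[>] (0:ℝ)) (𝓝 (r w + L * ⟪xp - y, w - xp⟫)) := by
    have hc : Continuous (fun t : ℝ => r w + L * ⟪xp - y, w - xp⟫ + L / 2 * t * ‖w - xp‖ ^ 2) := by
      fun_prop
    have := (hc.tendsto 0).mono_left (nhdsWithin_le_nhds (s := Ioi (0:ℝ)))
    simpa using this
  refine ge_of_tendsto htend ?_
  filter_upwards [Ioc_mem_nhdsGT_of_mem (by norm_num : (0:ℝ) ∈ Ico 0 1)] with t ht
  exact key t ht

end ProxGradAux

theorem stmt9 {m : ℕ} (g r : EuclideanSpace ℝ (Fin m) → ℝ)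
    (hg : ConvexOn ℝ Set.univ g) (hr : ConvexOn ℝ Set.univ r)
    (gradg : EuclideanSpace ℝ (Fin m) → EuclideanSpace ℝ (Fin m))
    (hgrad : ∀ z, HasGradientAt g (gradg z) z)
    (L : ℝ) (hL : 0 < L)
    (hLip : ∀ z₁ z₂, ‖gradg z₁ - gradg z₂‖ ≤ L * ‖z₁ - z₂‖)
    (zseq : ℕ → EuclideanSpace ℝ (Fin m))
    (hstep : ∀ k, ∀ w,
        (L / 2) * ‖zseq (k + 1) - (zseq k - (1 / L) • gradg (zseq k))‖ ^ 2 +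
            r (zseq (k + 1)) ≤
          (L / 2) * ‖w - (zseq k - (1 / L) • gradg (zseq k))‖ ^ 2 + r w)
    (zstar : EuclideanSpace ℝ (Fin m))
    (hmin : ∀ z, g zstar + r zstar ≤ g z + r z)
    (K : ℕ) (hK : 0 < K) :
    g (zseq K) + r (zseq K) - (g zstar + r zstar) ≤
      L * ‖zseq 0 - zstar‖ ^ 2 / (2 * K) := by
  have key : ∀ (k : ℕ) (w : EuclideanSpace ℝ (Fin m)),
      g (zseq (k + 1)) + r (zseq (k + 1)) ≤
        g w + r w + L / 2 * (‖w - zseq k‖ ^ 2 - ‖w - zseq (k + 1)‖ ^ 2) := by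
    intro k w
    set x := zseq k with hx
    set xp := zseq (k + 1) with hxp
    set y := x - (1 / L) • gradg x with hy
    have hopt : r xp ≤ r w + L * ⟪xp - y, w - xp⟫ :=
      prox_opt_aux hr xp y (fun w' => hstep k w') w
    have hdes : g xp ≤ g x + ⟪gradg x, xp - x⟫ + L / 2 * ‖xp - x‖ ^ 2 :=
      descent_lemma hgrad hLip x xp
    have hcvx : g x + ⟪gradg x, w - x⟫ ≤ g w := grad_convex_ineq hg hgrad x w
    have e1 : L * ⟪xp - y, w - xp⟫ = L * ⟪xp - x, w - xp⟫ + ⟪gradg x, w - xp⟫ := by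
      have h : xp - y = (xp - x) + (1 / L) • gradg x := by rw [hy]; module
      rw [h, inner_add_left, real_inner_smul_left]
      field_simp
    have e2 : ⟪gradg x, xp - x⟫ + ⟪gradg x, w - xp⟫ = ⟪gradg x, w - x⟫ := by
      rw [← inner_add_right]
      congr 1
      module
    have e3 : L / 2 * ‖w - x‖ ^ 2
        = L / 2 * ‖w - xp‖ ^ 2 + L * ⟪w - xp, xp - x⟫ + L / 2 * ‖xp - x‖ ^ 2 := by
      have h : w - x = (w - xp) + (xp - x) := by module
      rw [h, norm_add_sq_real]
      ring
    have e4 : L * ⟪xp - x, w - xp⟫ = L * ⟪w - xp, xp - x⟫ := by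
      rw [real_inner_comm]
    linarith
  have main : ∀ n : ℕ, (n : ℝ) * (g (zseq n) + r (zseq n) - (g zstar + r zstar)) ≤
      L / 2 * (‖zstar - zseq 0‖ ^ 2 - ‖zstar - zseq n‖ ^ 2) := by
    intro n
    induction n with
    | zero => simp
    | succ n ih =>
      have h1 := key n zstar
      have h2 : g (zseq (n + 1)) + r (zseq (n + 1)) ≤ g (zseq n) + r (zseq n) := by
        have := key n (zseq n)
        have hz : ‖zseq n - zseq n‖ = 0 := by simp
        rw [hz] at this
        have hLY : 0 ≤ L * ‖zseq n - zseq (n + 1)‖ ^ 2 :=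
          mul_nonneg hL.le (sq_nonneg _)
        nlinarith [this, hLY]
      have hmul := mul_le_mul_of_nonneg_left h2 (Nat.cast_nonneg (α := ℝ) n)
      push_cast
      nlinarith [ih, h1, hmul]
  have hfin := main K
  have hK' : (0:ℝ) < K := by exact_mod_cast hK
  rw [le_div_iff₀ (by positivity)]
  have hnorm2 : ‖zstar - zseq 0‖ ^ 2 = ‖zseq 0 - zstar‖ ^ 2 := by rw [norm_sub_rev]
  rw [hnorm2] at hfin
  nlinarith [hfin, mul_nonneg hL.le (sq_nonneg ‖zstar - zseq K‖), hK']
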